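/- arXiv:2509.26295 — 3 statements merged into one kernel-verified Lean document; each statement's English description precedes it below -/
import Mathlib

section
/- Let K = Q_p(μ) where μ is a primitive p-th root of unity and p is an odd prime. Then there is a unique element π ∈ K with π^{p-1} = -p and |(1+π) - μ| ≤ p^{-2/(p-1)}. -/
open Finset IsUltrametricDist

/-- Auxiliary: in an ultrametric normed field, products of unit-ball elements that are
termwise `r`-close are `r`-close. -/
theorem aux_prod_diff_le {K : Type*} [NormedField K] [IsUltrametricDist K] {ι : Type*}
    (s : Finset ι) (f g : ι → K) {r : ℝ} (hr : 0 ≤ r)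
    (hf : ∀ i ∈ s, ‖f i‖ ≤ 1) (hg : ∀ i ∈ s, ‖g i‖ ≤ 1)
    (h : ∀ i ∈ s, ‖f i - g i‖ ≤ r) : ‖∏ i ∈ s, f i - ∏ i ∈ s, g i‖ ≤ r := by
  induction s using Finset.cons_induction with
  | empty => simpa using hr
  | cons a s ha ih =>
    rw [Finset.prod_cons, Finset.prod_cons]
    have key : f a * ∏ i ∈ s, f i - g a * ∏ i ∈ s, g i
        = f a * (∏ i ∈ s, f i - ∏ i ∈ s, g i) + (f a - g a) * ∏ i ∈ s, g i := by ring
    rw [key]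
    refine (norm_add_le_max _ _).trans (max_le ?_ ?_)
    · rw [norm_mul]
      calc ‖f a‖ * ‖∏ i ∈ s, f i - ∏ i ∈ s, g i‖
          ≤ 1 * r := by
            refine mul_le_mul (hf a (Finset.mem_cons_self a s)) ?_ (norm_nonneg _) zero_le_one
            exact ih (fun i hi => hf i (Finset.mem_cons_of_mem hi))
              (fun i hi => hg i (Finset.mem_cons_of_mem hi))
              (fun i hi => h i (Finset.mem_cons_of_mem hi))
        _ = r := one_mul r
    · rw [norm_mul]
      calc ‖f a - g a‖ * ‖∏ i ∈ s, g i‖ ≤ r * 1 := by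
            refine mul_le_mul (h a (Finset.mem_cons_self a s)) ?_ (norm_nonneg _) hr
            rw [norm_prod]
            exact Finset.prod_le_one (fun i _ => norm_nonneg _)
              (fun i hi => hg i (Finset.mem_cons_of_mem hi))
        _ = r := mul_one r

/-- Let `K = ℚ_p(μ)` where `μ` is a primitive `p`-th root of unity, `p` an odd prime,
with its (multiplicative, nonarchimedean) norm extending the one of `ℚ_p` (normalized
by `|p| = p⁻¹`).  Then there is a unique `π ∈ K` with `π^(p-1) = -p` and
`|(1+π) - μ| ≤ p^(-2/(p-1))`. -/
theorem stmt_3 (p : ℕ) [Fact p.Prime] (hodd : Odd p)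
    (K : Type*) [NormedField K] [Algebra ℚ_[p] K]
    (hnorm : ∀ x : ℚ_[p], ‖algebraMap ℚ_[p] K x‖ = ‖x‖)
    (μ : K) (hμ : IsPrimitiveRoot μ p)
    (hK : Algebra.adjoin ℚ_[p] ({μ} : Set K) = ⊤) :
    ∃! π : K, π ^ (p - 1) = -(p : K) ∧
      ‖(1 + π) - μ‖ ≤ (p : ℝ) ^ (-(2 : ℝ) / ((p : ℝ) - 1)) := by
  have hp : p.Prime := Fact.out
  have hp1 : 1 < p := hp.one_lt
  have hpR : (0:ℝ) < p := by exact_mod_cast hp.pos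
  -- norms of naturals
  have hcast : ∀ n : ℕ, ((n : K)) = algebraMap ℚ_[p] K (n : ℚ_[p]) := by
    intro n; simp
  have hnat : ∀ n : ℕ, ‖(n : K)‖ ≤ 1 := by
    intro n
    rw [hcast n, hnorm]
    exact_mod_cast Padic.norm_int_le_one (p := p) (n : ℤ)
  haveI hud : IsUltrametricDist K :=
    isUltrametricDist_of_forall_norm_natCast_le_one hnat
  have hnat1 : ∀ n : ℕ, ¬ (p ∣ n) → ‖(n : K)‖ = 1 := by
    intro n hn
    refine le_antisymm (hnat n) ?_
    by_contra hlt
    push_neg at hlt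
    rw [hcast n, hnorm] at hlt
    have : ‖((n : ℤ) : ℚ_[p])‖ < 1 := by exact_mod_cast hlt
    rw [Padic.norm_intCast_lt_one_iff] at this
    exact hn (by exact_mod_cast this)
  have hpK : ‖(p : K)‖ = (p : ℝ)⁻¹ := by
    rw [hcast p, hnorm]; exact Padic.norm_p
  have hpKne : (p : K) ≠ 0 := by
    intro h0
    rw [h0, norm_zero] at hpK
    have : (0:ℝ) < (p:ℝ)⁻¹ := by positivity
    rw [← hpK] at this; exact lt_irrefl _ this
  -- completeness of K
  letI : NormedSpace ℚ_[p] K :=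
    ⟨fun c x => le_of_eq (by rw [Algebra.smul_def, norm_mul, hnorm])⟩
  have hμint : IsIntegral ℚ_[p] μ := by
    refine ⟨Polynomial.X ^ p - Polynomial.C 1, Polynomial.monic_X_pow_sub_C 1 hp.pos.ne', ?_⟩
    simp [hμ.pow_eq_one, sub_eq_zero]
  haveI : FiniteDimensional ℚ_[p] K := by
    have h1 : (IntermediateField.adjoin ℚ_[p] ({μ} : Set K)) = ⊤ := by
      apply IntermediateField.toSubalgebra_injective
      rw [IntermediateField.adjoin_simple_toSubalgebra_of_isAlgebraic hμint.isAlgebraic, hK]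
      rfl
    haveI h2 : FiniteDimensional ℚ_[p] (IntermediateField.adjoin ℚ_[p] ({μ} : Set K)) :=
      IntermediateField.finiteDimensional_adjoin (fun x hx => by
        rw [Set.mem_singleton_iff] at hx; subst hx; exact hμint)
    rw [h1] at h2
    exact (IntermediateField.topEquiv (F := ℚ_[p]) (E := K)).toLinearEquiv.finiteDimensional
  haveI : CompleteSpace K := FiniteDimensional.complete ℚ_[p] K
  -- basic norm facts about μ
  classical
  have hμnorm : ‖μ‖ = 1 := by
    have h : ‖μ‖ ^ p = 1 := by
      rw [← norm_pow, hμ.pow_eq_one, norm_one]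
    rcases lt_trichotomy ‖μ‖ 1 with hlt | heq | hgt
    · have := pow_lt_one₀ (norm_nonneg μ) hlt hp.pos.ne'
      linarith
    · exact heq
    · have := one_lt_pow₀ hgt hp.pos.ne'
      linarith
  -- the product of (1 - μ^i)
  have hroots : Polynomial.nthRootsFinset p (1 : K) = (range p).image (μ ^ ·) := by
    symm
    apply Finset.eq_of_subset_of_card_le
    · intro x hx
      simp only [Finset.mem_image, Finset.mem_range] at hx
      obtain ⟨i, _, rfl⟩ := hx
      rw [Polynomial.mem_nthRootsFinset hp.pos (1 : K)]
      rw [← pow_mul, mul_comm, pow_mul, hμ.pow_eq_one, one_pow]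
    · rw [hμ.card_nthRootsFinset, Finset.card_image_of_injOn, card_range]
      intro a ha b hb hab
      exact hμ.pow_inj (mem_range.mp (by exact ha)) (mem_range.mp (by exact hb)) hab
  have hXprod : (Polynomial.X : Polynomial K) ^ p - 1
      = ∏ i ∈ range p, (Polynomial.X - Polynomial.C (μ ^ i)) := by
    rw [Polynomial.X_pow_sub_one_eq_prod hp.pos hμ, hroots, Finset.prod_image]
    intro a ha b hb hab
    exact hμ.pow_inj (mem_range.mp ha) (mem_range.mp hb) hab
  have hsplit : (Polynomial.X : Polynomial K) ^ p - 1
      = (Polynomial.X - Polynomial.C (1:K)) * ∏ i ∈ Ico 1 p, (Polynomial.X - Polynomial.C (μ ^ i)) := by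
    rw [hXprod, range_eq_Ico, Finset.prod_eq_prod_Ico_succ_bot hp.pos]
    norm_num
  have hpoly : (∑ i ∈ range p, (Polynomial.X : Polynomial K) ^ i)
      = ∏ i ∈ Ico 1 p, (Polynomial.X - Polynomial.C (μ ^ i)) := by
    apply mul_left_cancel₀ (Polynomial.X_sub_C_ne_zero (1:K))
    rw [← hsplit, Polynomial.C_1, mul_geom_sum]
  have hprod : ∏ i ∈ Ico 1 p, (1 - μ ^ i) = (p : K) := by
    have h := congrArg (Polynomial.eval 1) hpoly
    simpa [Polynomial.eval_prod, Polynomial.eval_finset_sum] using h.symm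
  -- norms of 1 - μ^i
  set l : K := μ - 1 with hl
  have hμ1 : μ ≠ 1 := hμ.ne_one hp1
  have hlne : l ≠ 0 := sub_ne_zero.mpr hμ1
  have hr0 : 0 < ‖l‖ := norm_pos_iff.mpr hlne
  have hfac : ∀ i : ℕ, 1 - μ ^ i = -l * (∑ j ∈ range i, μ ^ j) := by
    intro i
    have h := geom_sum_mul μ i
    rw [hl]
    linear_combination h
  have hcle : ∀ i : ℕ, ‖∑ j ∈ range i, μ ^ j‖ ≤ 1 := fun i =>
    norm_sum_le_of_forall_le_of_nonneg zero_le_one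
      (fun j _ => by rw [norm_pow, hμnorm, one_pow])
  have h1μi_le : ∀ i : ℕ, ‖1 - μ ^ i‖ ≤ ‖l‖ := by
    intro i
    rw [hfac i, norm_mul, norm_neg]
    exact mul_le_of_le_one_right (norm_nonneg _) (hcle i)
  have hgen : ∀ (x : K) (k : ℕ), ‖x‖ ≤ 1 → ‖1 - x ^ k‖ ≤ ‖1 - x‖ := by
    intro x k hx
    have h : 1 - x ^ k = (1 - x) * (∑ j ∈ range k, x ^ j) := by
      have h2 := geom_sum_mul x k
      linear_combination h2
    rw [h, norm_mul]
    refine mul_le_of_le_one_right (norm_nonneg _) ?_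
    exact norm_sum_le_of_forall_le_of_nonneg zero_le_one
      (fun j _ => by rw [norm_pow]; exact pow_le_one₀ (norm_nonneg x) hx)
  have h1μi : ∀ i ∈ Ico 1 p, ‖1 - μ ^ i‖ = ‖l‖ := by
    intro i hi
    rw [mem_Ico] at hi
    refine le_antisymm (h1μi_le i) ?_
    obtain ⟨k, hk⟩ : ∃ k, (μ ^ i) ^ k = μ := by
      have hnd : ¬ p ∣ i := Nat.not_dvd_of_pos_of_lt (by omega) hi.2
      obtain ⟨k, -, hk⟩ := Nat.exists_mul_mod_eq_one_of_coprime
        (((hp.coprime_iff_not_dvd).mpr hnd).symm) hp1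
      refine ⟨k, ?_⟩
      rw [← pow_mul]
      conv_lhs => rw [← Nat.div_add_mod (i * k) p]
      rw [pow_add, pow_mul, hμ.pow_eq_one, one_pow, one_mul, hk, pow_one]
    calc ‖l‖ = ‖1 - (μ ^ i) ^ k‖ := by rw [hk, hl, norm_sub_rev]
      _ ≤ ‖1 - μ ^ i‖ := hgen (μ ^ i) k (by rw [norm_pow, hμnorm, one_pow])
  have hrpow : ‖l‖ ^ (p - 1) = (p : ℝ)⁻¹ := by
    have h := congrArg (fun z : K => ‖z‖) hprod
    simp only [norm_prod] at h
    rw [Finset.prod_congr rfl h1μi, Finset.prod_const, Nat.card_Ico] at h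
    rw [h, hpK]
  have hr1 : ‖l‖ < 1 := by
    by_contra hge
    push_neg at hge
    have h1 : (1:ℝ) ≤ ‖l‖ ^ (p - 1) := one_le_pow₀ hge
    rw [hrpow] at h1
    have : (p:ℝ)⁻¹ < 1 := by
      rw [inv_lt_one_iff₀]; right; exact_mod_cast hp1
    linarith
  have hrinvle : (p : ℝ)⁻¹ ≤ ‖l‖ := by
    calc (p:ℝ)⁻¹ = ‖l‖ ^ (p - 1) := hrpow.symm
      _ ≤ ‖l‖ ^ 1 := pow_le_pow_of_le_one hr0.le hr1.le (by omega)
      _ = ‖l‖ := pow_one _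
  -- the unit C with l^(p-1) * C = p
  set C : K := ∏ i ∈ Ico 1 p, (∑ j ∈ range i, μ ^ j) with hCdef
  have hpeven : Even (p - 1) := Nat.Odd.sub_odd hodd odd_one
  have hprod2 : l ^ (p - 1) * C = (p : K) := by
    have h : ∏ i ∈ Ico 1 p, (1 - μ ^ i)
        = (-l) ^ (p - 1) * C := by
      rw [hCdef, show p - 1 = #(Ico 1 p) from (Nat.card_Ico 1 p).symm, ← Finset.prod_const,
        ← Finset.prod_mul_distrib]
      exact Finset.prod_congr rfl (fun i _ => hfac i)
    rw [hpeven.neg_pow] at h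
    rw [← h, hprod]
  have hcidiff : ∀ i : ℕ, ‖(∑ j ∈ range i, μ ^ j) - (i : K)‖ ≤ ‖l‖ := by
    intro i
    have h : (∑ j ∈ range i, μ ^ j) - (i : K) = ∑ j ∈ range i, (μ ^ j - 1) := by
      rw [sum_sub_distrib, Finset.sum_const, card_range, nsmul_eq_mul, mul_one]
    rw [h]
    refine norm_sum_le_of_forall_le_of_nonneg hr0.le (fun j _ => ?_)
    rw [norm_sub_rev]
    exact h1μi_le j
  have hile : ∀ i : ℕ, ‖(i : K)‖ ≤ 1 := hnat
  have hcile : ∀ i : ℕ, ‖∑ j ∈ range i, μ ^ j‖ ≤ 1 := hcle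
  -- factorial
  have hfact : ∏ i ∈ Ico 1 p, ((i : ℕ) : K) = (((p-1).factorial : ℕ) : K) := by
    rw [← Nat.cast_prod]
    congr 1
    rw [show p = (p-1) + 1 by omega]
    exact Finset.prod_Ico_id_eq_factorial (p-1)
  have hCfact : ‖C - (((p-1).factorial : ℕ) : K)‖ ≤ ‖l‖ := by
    rw [← hfact, hCdef]
    exact aux_prod_diff_le _ _ _ hr0.le (fun i _ => hcile i) (fun i _ => hile i)
      (fun i _ => hcidiff i)
  -- Wilson
  have hwil : (p : ℕ) ∣ ((p-1).factorial + 1) := by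
    rw [← ZMod.natCast_eq_zero_iff]
    push_cast
    rw [ZMod.wilsons_lemma]
    ring
  have hfact1 : ‖(((p-1).factorial : ℕ) : K) + 1‖ ≤ ‖l‖ := by
    obtain ⟨m, hm⟩ := hwil
    have h : (((p-1).factorial : ℕ) : K) + 1 = ((p * m : ℕ) : K) := by
      rw [← hm]; push_cast; ring
    rw [h]
    push_cast
    rw [norm_mul, hpK]
    calc (p:ℝ)⁻¹ * ‖(m : K)‖ ≤ (p:ℝ)⁻¹ * 1 :=
        mul_le_mul_of_nonneg_left (hnat m) (by positivity)
      _ = (p:ℝ)⁻¹ := mul_one _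
      _ ≤ ‖l‖ := hrinvle
  have hC1 : ‖C + 1‖ ≤ ‖l‖ := by
    have h : C + 1 = (C - (((p-1).factorial : ℕ) : K)) + ((((p-1).factorial : ℕ) : K) + 1) := by
      ring
    rw [h]
    exact (norm_add_le_max _ _).trans (max_le hCfact hfact1)
  -- the (p-1)-st root via Banach fixed point
  set q : ℕ := p - 1 with hqdef
  have hq1 : 1 ≤ q := by omega
  have hQ : ‖((q : ℕ) : K)‖ = 1 := hnat1 q (Nat.not_dvd_of_pos_of_lt (by omega) (by omega))
  set Q : K := ((q : ℕ) : K) with hQdef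
  have hQne : Q ≠ 0 := by
    intro h0; rw [h0, norm_zero] at hQ; exact one_ne_zero hQ.symm
  set c₀ : K := -C with hc₀def
  have hc₀ : ‖c₀ - 1‖ ≤ ‖l‖ := by
    rw [hc₀def, show -C - 1 = -(C + 1) by ring, norm_neg]
    exact hC1
  have hnorm1 : ∀ x : K, ‖x - 1‖ ≤ ‖l‖ → ‖x‖ ≤ 1 := by
    intro x hx
    calc ‖x‖ = ‖(x - 1) + 1‖ := by ring_nf
      _ ≤ max ‖x - 1‖ ‖(1:K)‖ := norm_add_le_max _ _
      _ ≤ 1 := max_le (hx.trans hr1.le) (by rw [norm_one])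
  have hpow1 : ∀ x : K, ‖x - 1‖ ≤ ‖l‖ → ∀ n : ℕ, ‖x ^ n - 1‖ ≤ ‖l‖ := by
    intro x hx n
    rw [norm_sub_rev]
    calc ‖1 - x ^ n‖ ≤ ‖1 - x‖ := hgen x n (hnorm1 x hx)
      _ ≤ ‖l‖ := by rw [norm_sub_rev]; exact hx
  set F : K → K := fun u => u - (u ^ q - c₀) * Q⁻¹ with hFdef
  have hFdiff : ∀ u u' : K, ‖u - 1‖ ≤ ‖l‖ → ‖u' - 1‖ ≤ ‖l‖ →
      ‖F u - F u'‖ ≤ ‖l‖ * ‖u - u'‖ := by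
    intro u u' hu hu'
    set S : K := ∑ i ∈ range q, u ^ i * u' ^ (q - 1 - i) with hSdef
    have hgs : S * (u - u') = u ^ q - u' ^ q := geom_sum₂_mul u u' q
    have key : F u - F u' = (u - u') * (Q - S) * Q⁻¹ := by
      have h1 : F u - F u' = (u - u') - (u ^ q - u' ^ q) * Q⁻¹ := by rw [hFdef]; ring
      rw [h1, ← hgs]
      field_simp
    rw [key, norm_mul, norm_mul, norm_inv, hQ, inv_one, mul_one]
    have hQS : ‖Q - S‖ ≤ ‖l‖ := by
      have h : Q - S = ∑ i ∈ range q, (1 - u ^ i * u' ^ (q - 1 - i)) := by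
        rw [hSdef, sum_sub_distrib, Finset.sum_const, card_range, nsmul_eq_mul, mul_one, hQdef]
      rw [h]
      refine norm_sum_le_of_forall_le_of_nonneg hr0.le (fun i _ => ?_)
      have h2 : 1 - u ^ i * u' ^ (q - 1 - i)
          = (1 - u ^ i) + u ^ i * (1 - u' ^ (q - 1 - i)) := by ring
      rw [h2]
      refine (norm_add_le_max _ _).trans (max_le ?_ ?_)
      · rw [norm_sub_rev]; exact hpow1 u hu i
      · rw [norm_mul]
        calc ‖u ^ i‖ * ‖1 - u' ^ (q - 1 - i)‖ ≤ 1 * ‖l‖ := by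
              refine mul_le_mul ?_ ?_ (norm_nonneg _) zero_le_one
              · rw [norm_pow]; exact pow_le_one₀ (norm_nonneg u) (hnorm1 u hu)
              · rw [norm_sub_rev]; exact hpow1 u' hu' _
          _ = ‖l‖ := one_mul _
    calc ‖u - u'‖ * ‖Q - S‖ ≤ ‖u - u'‖ * ‖l‖ :=
        mul_le_mul_of_nonneg_left hQS (norm_nonneg _)
      _ = ‖l‖ * ‖u - u'‖ := mul_comm _ _
  have hF1 : ‖F 1 - 1‖ ≤ ‖l‖ := by
    rw [hFdef]
    simp only [one_pow]
    rw [show (1:K) - (1 - c₀) * Q⁻¹ - 1 = -((1 - c₀) * Q⁻¹) by ring, norm_neg, norm_mul,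
      norm_inv, hQ, inv_one, mul_one, norm_sub_rev]
    exact hc₀
  have hFmaps : ∀ u : K, ‖u - 1‖ ≤ ‖l‖ → ‖F u - 1‖ ≤ ‖l‖ := by
    intro u hu
    have h2 := hFdiff u 1 hu (by simp [hr0.le])
    calc ‖F u - 1‖ = ‖(F u - F 1) + (F 1 - 1)‖ := by ring_nf
      _ ≤ max ‖F u - F 1‖ ‖F 1 - 1‖ := norm_add_le_max _ _
      _ ≤ ‖l‖ := by
          refine max_le (h2.trans ?_) hF1
          calc ‖l‖ * ‖u - 1‖ ≤ ‖l‖ * 1 :=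
              mul_le_mul_of_nonneg_left (hu.trans hr1.le) hr0.le
            _ = ‖l‖ := mul_one _
  -- Banach fixed point
  set sball : Set K := Metric.closedBall 1 ‖l‖ with hsdef
  have hmem : ∀ u : K, u ∈ sball ↔ ‖u - 1‖ ≤ ‖l‖ := by
    intro u; rw [hsdef, Metric.mem_closedBall, dist_eq_norm]
  have hsc : IsComplete sball := Metric.isClosed_closedBall.isComplete
  have hsf : Set.MapsTo F sball sball := fun u hu => (hmem _).2 (hFmaps u ((hmem _).1 hu))
  have hcontr : ContractingWith ⟨‖l‖, hr0.le⟩ (Set.MapsTo.restrict F sball sball hsf) := by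
    constructor
    · exact_mod_cast hr1
    · refine LipschitzWith.of_dist_le_mul (fun x y => ?_)
      simp only [Subtype.dist_eq, Set.MapsTo.val_restrict_apply, dist_eq_norm]
      exact hFdiff x y ((hmem _).1 x.2) ((hmem _).1 y.2)
  obtain ⟨v, hvs, hvfix, -, -⟩ := hcontr.exists_fixedPoint' hsc hsf
    ((hmem 1).2 (by simp [hr0.le])) (edist_ne_top _ _)
  have hvnorm : ‖v - 1‖ ≤ ‖l‖ := (hmem v).1 hvs
  have hveq : v ^ q = c₀ := by
    have h := hvfix
    rw [Function.IsFixedPt, hFdef] at h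
    have h2 : (v ^ q - c₀) * Q⁻¹ = 0 := by linear_combination -h
    rcases mul_eq_zero.mp h2 with h3 | h3
    · exact sub_eq_zero.mp h3
    · exact absurd (inv_eq_zero.mp h3) hQne
  -- the value of ‖l‖ as an rpow
  have hqR : ((q : ℕ) : ℝ) = (p : ℝ) - 1 := by
    rw [hqdef, Nat.cast_sub hp1.le, Nat.cast_one]
  have hqRne : ((p : ℝ) - 1) ≠ 0 := by
    have : (1:ℝ) < (p:ℝ) := by exact_mod_cast hp1
    linarith
  have hrval : ‖l‖ = (p : ℝ) ^ (-(1:ℝ) / ((p:ℝ) - 1)) := by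
    have h1 : ((p:ℝ) ^ (-(1:ℝ)/((p:ℝ)-1))) ^ q = (p:ℝ)⁻¹ := by
      rw [← Real.rpow_natCast ((p:ℝ) ^ (-(1:ℝ)/((p:ℝ)-1))) q, ← Real.rpow_mul hpR.le, hqR,
        div_mul_cancel₀ _ hqRne, Real.rpow_neg_one]
    have h2 : ‖l‖ ^ q = (p:ℝ)⁻¹ := hrpow
    exact (pow_left_strictMonoOn₀ (by omega : q ≠ 0)).injOn hr0.le
      (Real.rpow_nonneg hpR.le _) (h2.trans h1.symm)
  have hrr : ‖l‖ * ‖l‖ = (p : ℝ) ^ (-(2:ℝ) / ((p:ℝ) - 1)) := by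
    rw [hrval, ← Real.rpow_add hpR]
    congr 1
    ring
  -- existence
  have hπ1 : (l * v) ^ (p - 1) = -(p : K) := by
    rw [mul_pow, ← hqdef, hveq, hc₀def]
    rw [show l ^ q * -C = -(l ^ q * C) by ring, hprod2]
  have hπ2 : ‖(1 + l * v) - μ‖ ≤ (p : ℝ) ^ (-(2:ℝ) / ((p:ℝ) - 1)) := by
    have h : (1 + l * v) - μ = l * (v - 1) := by rw [hl]; ring
    rw [h, norm_mul, ← hrr]
    exact mul_le_mul_of_nonneg_left hvnorm hr0.le
  refine ⟨l * v, ⟨hπ1, hπ2⟩, ?_⟩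
  -- uniqueness
  rintro π' ⟨hπ'1, hπ'2⟩
  have hvone : ‖v‖ = 1 := by
    refine le_antisymm (hnorm1 v hvnorm) ?_
    by_contra hlt
    push_neg at hlt
    have h1 : (1:ℝ) = ‖v - (v - 1)‖ := by norm_num
    have h2 : ‖v - (v - 1)‖ ≤ max ‖v‖ ‖v - 1‖ := by
      rw [sub_eq_add_neg]
      exact (norm_add_le_max _ _).trans (by rw [norm_neg])
    have h3 : max ‖v‖ ‖v - 1‖ < 1 := max_lt hlt (lt_of_le_of_lt hvnorm hr1)
    linarith
  have hπnorm : ‖l * v‖ = ‖l‖ := by rw [norm_mul, hvone, mul_one]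
  have hπne : l * v ≠ 0 := by
    intro h0; rw [h0, norm_zero] at hπnorm; exact hr0.ne' hπnorm.symm
  have hdiff : ‖π' - l * v‖ ≤ ‖l‖ * ‖l‖ := by
    have h : π' - l * v = ((1 + π') - μ) - ((1 + l * v) - μ) := by ring
    rw [h, sub_eq_add_neg, hrr]
    refine (norm_add_le_max _ _).trans (max_le hπ'2 ?_)
    rw [norm_neg]
    exact hπ2
  set ζ : K := π' * (l * v)⁻¹ with hζdef
  have hζq : ζ ^ q = 1 := by
    rw [hζdef, mul_pow, inv_pow]
    rw [show π' ^ q = π' ^ (p-1) from rfl, hπ'1, show (l*v) ^ q = (l*v) ^ (p-1) from rfl, hπ1]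
    field_simp
  have hζ1 : ‖ζ - 1‖ ≤ ‖l‖ := by
    have h : ζ - 1 = (π' - l * v) * (l * v)⁻¹ := by
      rw [sub_mul, mul_inv_cancel₀ hπne]
    rw [h, norm_mul, norm_inv, hπnorm]
    calc ‖π' - l * v‖ * ‖l‖⁻¹ ≤ (‖l‖ * ‖l‖) * ‖l‖⁻¹ :=
        mul_le_mul_of_nonneg_right hdiff (by positivity)
      _ = ‖l‖ := by field_simp
  have hSne : (∑ i ∈ range q, ζ ^ i) ≠ 0 := by
    intro h0
    have h1 : ‖(∑ i ∈ range q, ζ ^ i) - Q‖ ≤ ‖l‖ := by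
      have h : (∑ i ∈ range q, ζ ^ i) - Q = ∑ i ∈ range q, (ζ ^ i - 1) := by
        rw [sum_sub_distrib, Finset.sum_const, card_range, nsmul_eq_mul, mul_one, hQdef]
      rw [h]
      exact norm_sum_le_of_forall_le_of_nonneg hr0.le (fun i _ => hpow1 ζ hζ1 i)
    rw [h0, zero_sub, norm_neg, hQ] at h1
    linarith
  have hζeq : ζ = 1 := by
    have h2 : (∑ i ∈ range q, ζ ^ i) * (ζ - 1) = 0 := by
      rw [geom_sum_mul, hζq, sub_self]
    rcases mul_eq_zero.mp h2 with h3 | h3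
    · exact absurd h3 hSne
    · rwa [sub_eq_zero] at h3
  rw [hζdef] at hζeq
  field_simp at hζeq
  exact (div_eq_iff (right_ne_zero_of_mul hπne)).mp hζeq
end

section
/- Let Φ(t) = Φ_m t^m + Φ_{m+1} t^{m+1} + ⋯ (m < 0 allowed) be a matrix-valued Laurent series solution of the Frobenius intertwining equation t∂t Φ + A(t)Φ(t) - pΦ(t)A(t^p) = 0, where A(t) = A_0 + A_1 t + ⋯ with A_0 nilpotent. Then all coefficients Φ_j with j < 0 vanish, i.e. Φ is a power series. -/
lemma aux_inj {K : Type*} [Field K] {r : ℕ} {a : Matrix (Fin r) (Fin r) K}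
    (ha : IsNilpotent a) {c q : K} (hc : c ≠ 0) {X : Matrix (Fin r) (Fin r) K}
    (hX : c • X + (a * X - q • (X * a)) = 0) : X = 0 := by
  let L : Module.End K (Matrix (Fin r) (Fin r) K) :=
    LinearMap.mulLeft K a - q • LinearMap.mulRight K a
  have hL : IsNilpotent L := by
    obtain ⟨n, hn⟩ := ha
    have h1 : IsNilpotent (LinearMap.mulLeft K a) :=
      ⟨n, by rw [LinearMap.pow_mulLeft, hn, LinearMap.mulLeft_zero_eq_zero]⟩
    have h2 : IsNilpotent (q • LinearMap.mulRight K a) :=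
      IsNilpotent.smul ⟨n, by rw [LinearMap.pow_mulRight, hn, LinearMap.mulRight_zero_eq_zero]⟩ q
    exact Commute.isNilpotent_sub ((LinearMap.commute_mulLeft_right a a).smul_right q) h1 h2
  have hu : IsUnit (c • (1 : Module.End K (Matrix (Fin r) (Fin r) K))) := by
    have : c • (1 : Module.End K (Matrix (Fin r) (Fin r) K))
        = algebraMap K (Module.End K (Matrix (Fin r) (Fin r) K)) c := by
      simp [Algebra.algebraMap_eq_smul_one]
    rw [this]
    exact (isUnit_iff_ne_zero.mpr hc).map (algebraMap K _)
  have hunit : IsUnit (c • (1 : Module.End K (Matrix (Fin r) (Fin r) K)) + L) :=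
    hL.isUnit_add_left_of_commute hu ((Commute.one_left L).smul_left c).symm
  obtain ⟨v, hv⟩ := hunit.exists_left_inv
  have happ : (c • (1 : Module.End K (Matrix (Fin r) (Fin r) K)) + L) X = 0 := by
    simpa [L] using hX
  calc X = (v * (c • (1 : Module.End K (Matrix (Fin r) (Fin r) K)) + L)) X := by
        rw [hv]; simp
    _ = v ((c • (1 : Module.End K (Matrix (Fin r) (Fin r) K)) + L) X) := rfl
    _ = 0 := by rw [happ]; simp


/-- A matrix-valued Laurent series solution `Φ(t) = ∑_{j ≥ m} Φ_j t^j` (with `m < 0`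
allowed) of the Frobenius intertwining equation
`t∂t Φ + A(t)Φ(t) - pΦ(t)A(t^p) = 0`, where `A(t) = A₀ + A₁t + ⋯` with `A₀`
nilpotent, has vanishing coefficients in all negative degrees: `Φ_j = 0` for `j < 0`.
The equation is written coefficientwise; the finite sums below contain all possibly
nonzero terms of the convolutions, since `Φ_j = 0` for `j < m`. -/
theorem stmt_6 (p : ℕ) (hp : p.Prime)
    (K : Type*) [Field K] [CharZero K] (r : ℕ)
    (A : ℕ → Matrix (Fin r) (Fin r) K) (hA0 : IsNilpotent (A 0))
    (m : ℤ)
    (Φ : ℤ → Matrix (Fin r) (Fin r) K)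
    (hsupp : ∀ j : ℤ, j < m → Φ j = 0)
    (hΦ : ∀ k : ℤ, (k : K) • Φ k
      + (∑ i ∈ Finset.range ((k - m).toNat + 1), A i * Φ (k - (i : ℤ)))
      - (p : K) • (∑ i ∈ Finset.range ((k - m).toNat + 1), Φ (k - (p : ℤ) * i) * A i)
      = 0) :
    ∀ j : ℤ, j < 0 → Φ j = 0 := by
  have key : ∀ n : ℕ, ∀ j : ℤ, j < 0 → j < m + n → Φ j = 0 := by
    intro n
    induction n with
    | zero => intro j hj hjm; exact hsupp j (by omega)
    | succ n IH =>
      intro j hj hjm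
      have hIH : ∀ i : ℤ, 1 ≤ i → Φ (j - i) = 0 := fun i hi =>
        IH (j - i) (by omega) (by omega)
      have h1 : ∑ i ∈ Finset.range ((j - m).toNat + 1), A i * Φ (j - (i : ℤ))
          = A 0 * Φ j := by
        rw [Finset.sum_eq_single_of_mem 0 (Finset.mem_range.mpr (Nat.succ_pos _))]
        · simp
        · intro i _ hi
          rw [hIH i (by omega), mul_zero]
      have h2 : ∑ i ∈ Finset.range ((j - m).toNat + 1), Φ (j - (p : ℤ) * i) * A i
          = Φ j * A 0 := by
        rw [Finset.sum_eq_single_of_mem 0 (Finset.mem_range.mpr (Nat.succ_pos _))]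
        · simp
        · intro i _ hi
          have hpi : (1 : ℤ) ≤ (p : ℤ) * i := by
            have h1 : (1:ℤ) ≤ (p:ℤ) := by exact_mod_cast hp.one_lt.le
            have h2 : (1:ℤ) ≤ (i:ℤ) := by exact_mod_cast Nat.one_le_iff_ne_zero.mpr hi
            nlinarith
          rw [hIH _ hpi, zero_mul]
      have heq := hΦ j
      rw [h1, h2] at heq
      have hc : (j : K) ≠ 0 := Int.cast_ne_zero.mpr (by omega)
      exact aux_inj hA0 hc (by linear_combination (norm := module) heq)
  intro j hj
  rcases lt_or_ge j m with h | h
  · exact hsupp j h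
  · exact key ((j - m).toNat + 1) j hj (by omega)
end

section
/- Let g(q) = Σ_k a_k q^k be a power series over Q_p converging on a closed disc of radius p^{-1/(p-1)} (i.e. v_p(a_k) - k/(p-1) → ∞). Let π be an element with π^{p-1} = -p, and let θ, θ' be (p-1)-st roots of unity in Z_p. Then v(g(πθ)) = v(g(πθ')). -/
open Filter

section ultra

variable {K : Type*} [NormedField K] [IsUltrametricDist K]

lemma my_norm_sum_eq_sup (s : Finset ℕ) (u : ℕ → K) :
    (∀ j ∈ s, ∀ j' ∈ s, j ≠ j' → u j ≠ 0 → u j' ≠ 0 → ‖u j‖₊ ≠ ‖u j'‖₊) →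
    ‖∑ j ∈ s, u j‖₊ = s.sup fun j => ‖u j‖₊ := by
  classical
  induction s using Finset.induction_on with
  | empty => simp
  | @insert a t hat ih =>
    intro hd
    rw [Finset.sum_insert hat, Finset.sup_insert]
    have ht : ‖∑ j ∈ t, u j‖₊ = t.sup fun j => ‖u j‖₊ :=
      ih fun j hj j' hj' => hd j (Finset.mem_insert_of_mem hj) j' (Finset.mem_insert_of_mem hj')
    by_cases hua : u a = 0
    · simp [hua, ht]
    · have hne : ‖u a‖₊ ≠ ‖∑ j ∈ t, u j‖₊ := by
        rw [ht]
        intro hEq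
        rcases t.eq_empty_or_nonempty with rfl | htne
        · simp only [Finset.sup_empty, bot_eq_zero, nnnorm_eq_zero] at hEq
          exact hua hEq
        · obtain ⟨i, hit, hi⟩ := Finset.exists_mem_eq_sup t htne fun j => ‖u j‖₊
          rw [hi] at hEq
          have hia : a ≠ i := fun h => hat (h ▸ hit)
          have hui : u i ≠ 0 := by
            intro h0
            rw [h0, nnnorm_zero] at hEq
            exact hua (nnnorm_eq_zero.mp hEq)
          exact hd a (Finset.mem_insert_self a t) i (Finset.mem_insert_of_mem hit) hia hua hui hEq
      rw [IsUltrametricDist.nnnorm_add_eq_max_of_nnnorm_ne_nnnorm hne, ht]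

lemma my_norm_sum_eq_norm_sum (s : Finset ℕ) (u v : ℕ → K)
    (h : ∀ j ∈ s, ‖u j‖₊ = ‖v j‖₊)
    (hd : ∀ j ∈ s, ∀ j' ∈ s, j ≠ j' → u j ≠ 0 → u j' ≠ 0 → ‖u j‖₊ ≠ ‖u j'‖₊) :
    ‖∑ j ∈ s, u j‖ = ‖∑ j ∈ s, v j‖ := by
  have hz : ∀ j ∈ s, v j ≠ 0 → u j ≠ 0 := by
    intro j hj hvj h0
    apply hvj
    rw [← nnnorm_eq_zero, ← h j hj, h0, nnnorm_zero]
  have hd' : ∀ j ∈ s, ∀ j' ∈ s, j ≠ j' → v j ≠ 0 → v j' ≠ 0 → ‖v j‖₊ ≠ ‖v j'‖₊ := by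
    intro j hj j' hj' hne hvj hvj'
    rw [← h j hj, ← h j' hj']
    exact hd j hj j' hj' hne (hz j hj hvj) (hz j' hj' hvj')
  rw [← coe_nnnorm, ← coe_nnnorm, my_norm_sum_eq_sup s u hd, my_norm_sum_eq_sup s v hd',
    Finset.sup_congr rfl h]

end ultra

section main

variable {p : ℕ} [Fact p.Prime] {K : Type*} [NormedField K] [CompleteSpace K]
  [IsUltrametricDist K] [Algebra ℚ_[p] K]

lemma my_inner_summable (n : ℕ) (hn : 0 < n) (hpn : (n : ℝ) = (p : ℝ) - 1)
    (a : ℕ → ℚ_[p])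
    (ha : Tendsto (fun k : ℕ => ‖a k‖ * (p : ℝ) ^ (-(k : ℝ) / ((p : ℝ) - 1)))
      atTop (nhds 0)) (j : ℕ) :
    Summable fun m : ℕ => a (m * n + j) * (-(p : ℚ_[p])) ^ m := by
  have hp0 : (0:ℝ) < (p:ℝ) := by
    have := (Fact.out : p.Prime).two_le; positivity
  have hn0 : (n:ℝ) ≠ 0 := by positivity
  have ha' : Tendsto (fun k : ℕ => ‖a k‖ * (p : ℝ) ^ (-(k : ℝ) / (n : ℝ)))
      atTop (nhds 0) := by simpa only [hpn] using ha
  have hcomp : Tendsto (fun m : ℕ => m * n + j) atTop atTop :=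
    tendsto_atTop_mono
      (fun m => le_trans (Nat.le_mul_of_pos_right m hn) (Nat.le_add_right _ _)) tendsto_id
  have h0 : Tendsto (fun m : ℕ =>
      (p:ℝ) ^ ((j:ℝ)/(n:ℝ)) * (‖a (m * n + j)‖ * (p : ℝ) ^ (-((m * n + j : ℕ) : ℝ) / (n : ℝ))))
      atTop (nhds 0) := by
    have := (ha'.comp hcomp).const_mul ((p:ℝ) ^ ((j:ℝ)/(n:ℝ)))
    simpa using this
  have hnormterm : ∀ m : ℕ, ‖a (m * n + j) * (-(p : ℚ_[p])) ^ m‖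
      = (p:ℝ) ^ ((j:ℝ)/(n:ℝ)) *
        (‖a (m * n + j)‖ * (p : ℝ) ^ (-((m * n + j : ℕ) : ℝ) / (n : ℝ))) := by
    intro m
    rw [norm_mul, norm_pow, norm_neg, Padic.norm_p]
    rw [mul_comm ((p:ℝ) ^ ((j:ℝ)/(n:ℝ))) _, mul_assoc]
    congr 1
    rw [← Real.rpow_add hp0]
    have hexp : (-((m * n + j : ℕ) : ℝ) / (n : ℝ)) + (j:ℝ)/(n:ℝ) = -(m:ℝ) := by
      push_cast
      field_simp
      ring
    rw [hexp, Real.rpow_neg hp0.le, Real.rpow_natCast, inv_pow]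
  refine NonarchimedeanAddGroup.summable_of_tendsto_cofinite_zero ?_
  rw [Nat.cofinite_eq_atTop, tendsto_zero_iff_norm_tendsto_zero]
  exact h0.congr fun m => (hnormterm m).symm

set_option maxHeartbeats 2000000 in
lemma my_tsum_eq (n : ℕ) (hn : 0 < n) (hpn : (n : ℝ) = (p : ℝ) - 1)
    (hnorm : ∀ x : ℚ_[p], ‖algebraMap ℚ_[p] K x‖ = ‖x‖)
    (π : K) (hπ : π ^ n = -(p : K)) (a : ℕ → ℚ_[p])
    (ha : Tendsto (fun k : ℕ => ‖a k‖ * (p : ℝ) ^ (-(k : ℝ) / ((p : ℝ) - 1))) atTop (nhds 0))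
    (θ : ℚ_[p]) (hθ : θ ^ n = 1) :
    ∑' k : ℕ, algebraMap ℚ_[p] K (a k) * (π * algebraMap ℚ_[p] K θ) ^ k =
      ∑ j ∈ Finset.range n, (algebraMap ℚ_[p] K θ) ^ j *
        (π ^ j * algebraMap ℚ_[p] K (∑' m : ℕ, a (m * n + j) * (-(p : ℚ_[p])) ^ m)) := by
  haveI : NeZero n := ⟨hn.ne'⟩
  set A := algebraMap ℚ_[p] K with hA
  have hiso : Isometry A := AddMonoidHomClass.isometry_of_norm A hnorm
  have hp0 : (0:ℝ) < (p:ℝ) := by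
    have := (Fact.out : p.Prime).two_le; positivity
  have hn0 : (n:ℝ) ≠ 0 := by positivity
  set F : ℕ → K := fun k => A (a k) * (π * A θ) ^ k with hF
  -- ‖θ‖ = 1
  have hθ1 : ‖θ‖ = 1 := by
    have h1 : ‖θ‖₊ ^ n = 1 := by rw [← nnnorm_pow, hθ, nnnorm_one]
    rw [← coe_nnnorm θ, (pow_eq_one_iff_of_nonneg (by positivity) hn.ne').mp h1, NNReal.coe_one]
  have hAθ : ‖A θ‖ = 1 := by rw [hnorm, hθ1]
  -- norm of π
  have hπn : ‖π‖ ^ n = (p:ℝ)⁻¹ := by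
    rw [← norm_pow, hπ, norm_neg, ← map_natCast A, hnorm, Padic.norm_p]
  have hπr : ‖π‖ = (p:ℝ) ^ (-(1:ℝ)/(n:ℝ)) := by
    have h1 : ‖π‖ = (‖π‖ ^ n) ^ ((n:ℝ)⁻¹ : ℝ) := by
      rw [← Real.rpow_natCast ‖π‖ n, ← Real.rpow_mul (norm_nonneg π),
        mul_inv_cancel₀ hn0, Real.rpow_one]
    rw [h1, hπn, ← Real.rpow_neg_one (p:ℝ), ← Real.rpow_mul hp0.le]
    congr 1
  have hπk : ∀ k : ℕ, ‖π‖ ^ k = (p:ℝ) ^ (-(k:ℝ)/(n:ℝ)) := by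
    intro k
    rw [hπr, ← Real.rpow_natCast ((p:ℝ) ^ (-(1:ℝ)/(n:ℝ))) k, ← Real.rpow_mul hp0.le]
    congr 1
    field_simp
  -- summability of F
  have hFnorm : ∀ k : ℕ, ‖F k‖ = ‖a k‖ * (p:ℝ) ^ (-(k:ℝ)/(n:ℝ)) := by
    intro k
    rw [hF]
    simp only [norm_mul, norm_pow, hnorm]
    rw [hθ1, mul_one, hπk k]
  have ha' : Tendsto (fun k : ℕ => ‖a k‖ * (p : ℝ) ^ (-(k : ℝ) / (n : ℝ)))
      atTop (nhds 0) := by simpa only [hpn] using ha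
  have hFs : Summable F := by
    refine NonarchimedeanAddGroup.summable_of_tendsto_cofinite_zero ?_
    rw [Nat.cofinite_eq_atTop, tendsto_zero_iff_norm_tendsto_zero]
    exact ha'.congr fun k => (hFnorm k).symm
  -- regroup
  set e : Fin n × ℕ ≃ ℕ := (Equiv.prodComm (Fin n) ℕ).trans (Nat.divModEquiv n).symm with he
  have hee : ∀ x : Fin n × ℕ, e x = x.2 * n + (x.1 : ℕ) := fun x => rfl
  rw [← Equiv.tsum_eq e F]
  have hinner : ∀ j : Fin n, Summable fun m : ℕ => F (e (j, m)) := by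
    intro j
    have hinj : Function.Injective fun m : ℕ => m * n + (j:ℕ) := by
      intro m₁ m₂ h
      have := Nat.add_right_cancel h
      exact Nat.eq_of_mul_eq_mul_right hn this
    exact (hFs.comp_injective hinj).congr fun m => rfl
  rw [show (∑' c : Fin n × ℕ, F (e c)) = ∑' (j : Fin n) (m : ℕ), F (e (j, m)) from
      Summable.tsum_prod' (e.summable_iff.mpr hFs) hinner, tsum_fintype,
    ← Fin.sum_univ_eq_sum_range (fun j => (A θ) ^ j *
      (π ^ j * A (∑' m : ℕ, a (m * n + j) * (-(p : ℚ_[p])) ^ m))) n]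
  refine Finset.sum_congr rfl fun j _ => ?_
  have hterm : ∀ m : ℕ, F (m * n + (j:ℕ))
      = (A θ) ^ (j:ℕ) * (π ^ (j:ℕ) * A (a (m * n + (j:ℕ)) * (-(p : ℚ_[p])) ^ m)) := by
    intro m
    show A (a (m * n + (j:ℕ))) * (π * A θ) ^ (m * n + (j:ℕ)) = _
    rw [pow_add, pow_mul', mul_pow, hπ, ← map_pow, hθ, map_one, mul_one,
      map_mul, map_pow, map_neg, map_natCast]
    ring
  calc ∑' m : ℕ, F (e (j, m))
      = ∑' m : ℕ, (A θ) ^ (j:ℕ) * (π ^ (j:ℕ) * A (a (m * n + (j:ℕ)) * (-(p : ℚ_[p])) ^ m)) :=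
        tsum_congr fun m => by rw [hee]; exact hterm m
    _ = (A θ) ^ (j:ℕ) * (π ^ (j:ℕ) *
          A (∑' m : ℕ, a (m * n + (j:ℕ)) * (-(p : ℚ_[p])) ^ m)) := by
        rw [tsum_mul_left, tsum_mul_left,
          (my_inner_summable n hn hpn a ha (j:ℕ)).map_tsum A hiso.continuous]

end main


/-- Let `g(q) = ∑ a_k q^k` be a power series over `ℚ_p` converging on the closed disc
of radius `p^(-1/(p-1))` (i.e. `‖a_k‖·p^(-k/(p-1)) → 0`).  Let `π` be an element of a
complete nonarchimedean normed field extension `K` of `ℚ_p` with `π^(p-1) = -p`, and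
let `θ, θ'` be `(p-1)`-st roots of unity in `ℚ_p`.  Then `g(πθ)` and `g(πθ')` have the
same valuation, i.e. the same norm. -/
theorem stmt_8 (p : ℕ) [Fact p.Prime]
    (K : Type*) [NormedField K] [CompleteSpace K] [IsUltrametricDist K]
    [Algebra ℚ_[p] K]
    (hnorm : ∀ x : ℚ_[p], ‖algebraMap ℚ_[p] K x‖ = ‖x‖)
    (π : K) (hπ : π ^ (p - 1) = -(p : K))
    (a : ℕ → ℚ_[p])
    (ha : Filter.Tendsto (fun k : ℕ => ‖a k‖ * (p : ℝ) ^ (-(k : ℝ) / ((p : ℝ) - 1)))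
      Filter.atTop (nhds 0))
    (θ θ' : ℚ_[p]) (hθ : θ ^ (p - 1) = 1) (hθ' : θ' ^ (p - 1) = 1) :
    ‖∑' k : ℕ, algebraMap ℚ_[p] K (a k) * (π * algebraMap ℚ_[p] K θ) ^ k‖ =
    ‖∑' k : ℕ, algebraMap ℚ_[p] K (a k) * (π * algebraMap ℚ_[p] K θ') ^ k‖ := by
  have hp2 : 2 ≤ p := (Fact.out : p.Prime).two_le
  set n := p - 1 with hndef
  have hn : 0 < n := by omega
  have hpn : (n : ℝ) = (p : ℝ) - 1 := by
    rw [hndef]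
    push_cast [Nat.cast_sub (by omega : 1 ≤ p)]
    ring
  set A := algebraMap ℚ_[p] K with hA
  have hiso : Isometry A := AddMonoidHomClass.isometry_of_norm A hnorm
  have hp0 : (0:ℝ) < (p:ℝ) := by positivity
  have hp1 : (1:ℝ) < (p:ℝ) := by exact_mod_cast Nat.lt_of_lt_of_le one_lt_two hp2
  rw [my_tsum_eq n hn hpn hnorm π hπ a ha θ hθ, my_tsum_eq n hn hpn hnorm π hπ a ha θ' hθ']
  set T : ℕ → ℚ_[p] := fun j => ∑' m : ℕ, a (m * n + j) * (-(p : ℚ_[p])) ^ m with hT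
  have hnn : ∀ x : ℚ_[p], ‖A x‖₊ = ‖x‖₊ := fun x => NNReal.coe_injective (by simpa using hnorm x)
  have hA1 : ∀ {τ : ℚ_[p]}, τ ^ n = 1 → ‖A τ‖₊ = 1 := by
    intro τ hτ
    have h1 : ‖A τ‖₊ ^ n = 1 := by
      rw [← nnnorm_pow, ← map_pow, hτ, map_one, nnnorm_one]
    exact (pow_eq_one_iff_of_nonneg (by positivity) hn.ne').mp h1
  have hπn : ‖π‖ ^ n = (p:ℝ)⁻¹ := by
    rw [← norm_pow, hπ, norm_neg, ← map_natCast A, hnorm, Padic.norm_p]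
  have hwnorm : ∀ {τ : ℚ_[p]}, τ ^ n = 1 → ∀ j : ℕ,
      ‖A τ ^ j * (π ^ j * A (T j))‖₊ = ‖π‖₊ ^ j * ‖T j‖₊ := by
    intro τ hτ j
    rw [nnnorm_mul, nnnorm_pow, hA1 hτ, one_pow, one_mul, nnnorm_mul, nnnorm_pow, hnn]
  refine my_norm_sum_eq_norm_sum (Finset.range n)
    (fun j => A θ ^ j * (π ^ j * A (T j))) (fun j => A θ' ^ j * (π ^ j * A (T j)))
    (fun j _ => by rw [hwnorm hθ j, hwnorm hθ' j]) ?_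
  intro j hj j' hj' hne hu hu'
  rw [Finset.mem_range] at hj hj'
  have hTj : T j ≠ 0 := fun h0 => hu (by simp [h0])
  have hTj' : T j' ≠ 0 := fun h0 => hu' (by simp [h0])
  rw [hwnorm hθ j, hwnorm hθ j']
  intro hEq
  have hEqR : ‖π‖ ^ j * ‖T j‖ = ‖π‖ ^ j' * ‖T j'‖ := by
    simpa using congrArg NNReal.toReal hEq
  have h₁ : ‖T j‖ = (p:ℝ) ^ (-(T j).valuation : ℤ) := Padic.norm_eq_zpow_neg_valuation hTj
  have h₂ : ‖T j'‖ = (p:ℝ) ^ (-(T j').valuation : ℤ) := Padic.norm_eq_zpow_neg_valuation hTj'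
  set z₁ := (T j).valuation
  set z₂ := (T j').valuation
  have hEn : ((p:ℝ)⁻¹) ^ j * ((p:ℝ) ^ (-z₁ : ℤ)) ^ n
      = ((p:ℝ)⁻¹) ^ j' * ((p:ℝ) ^ (-z₂ : ℤ)) ^ n := by
    calc ((p:ℝ)⁻¹) ^ j * ((p:ℝ) ^ (-z₁ : ℤ)) ^ n
        = (‖π‖ ^ j * ‖T j‖) ^ n := by rw [mul_pow, pow_right_comm, hπn, h₁]
      _ = (‖π‖ ^ j' * ‖T j'‖) ^ n := by rw [hEqR]
      _ = ((p:ℝ)⁻¹) ^ j' * ((p:ℝ) ^ (-z₂ : ℤ)) ^ n := by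
          rw [mul_pow, pow_right_comm, hπn, h₂]
  have cast1 : ∀ k : ℕ, ((p:ℝ)⁻¹) ^ k = (p:ℝ) ^ (-(k:ℤ)) := fun k => by
    rw [zpow_neg, zpow_natCast, inv_pow]
  have cast2 : ∀ z : ℤ, ((p:ℝ) ^ (-z : ℤ)) ^ n = (p:ℝ) ^ ((-z) * (n:ℤ)) := fun z => by
    rw [zpow_mul, zpow_natCast]
  have hE2 : (p:ℝ) ^ (-(j:ℤ) + (-z₁) * (n:ℤ)) = (p:ℝ) ^ (-(j':ℤ) + (-z₂) * (n:ℤ)) := by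
    rw [zpow_add₀ hp0.ne', zpow_add₀ hp0.ne', ← cast1 j, ← cast1 j', ← cast2 z₁, ← cast2 z₂]
    exact hEn
  have hexpEq : -(j:ℤ) + (-z₁) * (n:ℤ) = -(j':ℤ) + (-z₂) * (n:ℤ) :=
    zpow_right_injective₀ hp0 hp1.ne' hE2
  have hdvd : (n:ℤ) ∣ (j':ℤ) - (j:ℤ) := ⟨z₁ - z₂, by linear_combination hexpEq⟩
  have hj0 : ((j':ℤ) - (j:ℤ)) = 0 :=
    Int.eq_zero_of_abs_lt_dvd hdvd (abs_lt.mpr ⟨by omega, by omega⟩)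
  exact hne (by omega)
end
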